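/- Let n, m, z, ψ ≥ 1, let A ∈ ℝ^{n×z}, B ∈ ℝ^{n×m}, C ∈ ℝ^{m×n}, D ∈ ℝ^{n×ψ}, and let Z : ℝⁿ → ℝ^z. Let u*, u_I, γ : ℝ → ℝ^m and w : ℝ → ℝ^ψ be functions, and let x : ℝ → ℝⁿ and ζ : ℝ → ℝ^m be differentiable with, for all t ∈ ℝ: x'(t) = A·Z(x(t)) + B·(u*(t) + u_I(t)) + D·w(t) + B·γ(t) and ζ'(t) = −C·(A·Z(x(t)) + B·u*(t) + D·w(t)). Define σ(t) := C·x(t) + ζ(t). If the m×m matrix C·B is invertible and σ'(t) = 0 for all t (the system is in sliding mode), then u_I(t) = −γ(t) for all t, and consequently x'(t) = A·Z(x(t)) + B·u*(t) + D·w(t) for all t; that is, the motion in sliding mode equals the nominal dynamics under the ideal controller u*. -/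
import Mathlib


open Matrix

/-- Theorem 3 (Motion Equation in Sliding Mode), differentiable-solution version:
along the perturbed dynamics `x' = A·Z(x) + B·(u* + u_I) + D·w + B·γ` with
transient function `ζ' = −C·(A·Z(x) + B·u* + D·w)` and sliding variable
`σ = C·x + ζ`, if `C·B` is invertible and `σ' ≡ 0`, then `u_I = −γ` and the
motion equals the nominal dynamics `x' = A·Z(x) + B·u* + D·w`. -/
theorem motion_equation_in_sliding_mode
    (n m z ψ : ℕ) (hn : 1 ≤ n) (hm : 1 ≤ m) (hz : 1 ≤ z) (hψ : 1 ≤ ψ)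
    (A : Matrix (Fin n) (Fin z) ℝ) (B : Matrix (Fin n) (Fin m) ℝ)
    (C : Matrix (Fin m) (Fin n) ℝ) (D : Matrix (Fin n) (Fin ψ) ℝ)
    (Z : (Fin n → ℝ) → (Fin z → ℝ))
    (ustar uI γ : ℝ → Fin m → ℝ) (w : ℝ → Fin ψ → ℝ)
    (x : ℝ → Fin n → ℝ) (ζ : ℝ → Fin m → ℝ)
    (hx : ∀ t : ℝ, HasDerivAt x
      (A.mulVec (Z (x t)) + B.mulVec (ustar t + uI t) + D.mulVec (w t) +
        B.mulVec (γ t)) t)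
    (hζ : ∀ t : ℝ, HasDerivAt ζ
      (-(C.mulVec (A.mulVec (Z (x t)) + B.mulVec (ustar t) + D.mulVec (w t)))) t)
    (hCB : IsUnit (C * B))
    (hslide : ∀ t : ℝ, HasDerivAt (fun s => C.mulVec (x s) + ζ s) 0 t) :
    ∀ t : ℝ, uI t = -γ t ∧
      HasDerivAt x (A.mulVec (Z (x t)) + B.mulVec (ustar t) + D.mulVec (w t)) t := by
  intro t
  have hL : HasDerivAt (fun s => C.mulVec (x s))
      (C.mulVec (A.mulVec (Z (x t)) + B.mulVec (ustar t + uI t) + D.mulVec (w t) +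
        B.mulVec (γ t))) t := by
    exact ((Matrix.mulVecLin C).toContinuousLinearMap.hasFDerivAt).comp_hasDerivAt t (hx t)
  have hsum := hL.add (hζ t)
  have heq := (hslide t).unique hsum
  have hkey : (C * B).mulVec (uI t + γ t) = 0 := by
    have : C.mulVec (A.mulVec (Z (x t)) + B.mulVec (ustar t + uI t) + D.mulVec (w t) +
        B.mulVec (γ t)) + -(C.mulVec (A.mulVec (Z (x t)) + B.mulVec (ustar t) +
        D.mulVec (w t))) = 0 := heq.symm
    simp only [Matrix.mulVec_add, Matrix.mulVec_mulVec] at this ⊢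
    linear_combination this
  have hinj : Function.Injective (C * B).mulVec :=
    Matrix.mulVec_injective_iff_isUnit.2 hCB
  have h0 : uI t + γ t = 0 := by
    apply hinj
    simpa using hkey
  have huI : uI t = -γ t := eq_neg_of_add_eq_zero_left h0
  refine ⟨huI, ?_⟩
  have := hx t
  rw [huI] at this
  convert this using 1
  simp only [Matrix.mulVec_add, Matrix.mulVec_neg]
  abel
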